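/- arXiv:1011.3976 — 6 statements merged into one kernel-verified Lean document; each statement's English description precedes it below -/
import Mathlib

section
/- Let X be a compact metric space and Λ : C(X) → ℝ a concave functional such that at every u ∈ C(X), Λ is Gateaux differentiable with differential represented by a Borel probability measure on X (i.e. for each u there is a Borel probability measure μ_u with d/dt Λ(u + t·v)|_{t=0} = ∫_X v dμ_u for all v ∈ C(X)). Then for every u ∈ C(X), the infimum over Borel probability measures μ on X of Λ*(μ) + ∫_X u dμ coincides with the infimum of the same expression taken over all finite signed Borel measures, and both infima are attained and equal Λ(u). -/
open MeasureTheory Filter Set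

/-- Integration of a real function against a finite signed Borel measure,
via the Jordan decomposition. -/
noncomputable def sIntegral {X : Type*} [MeasurableSpace X]
    (μ : SignedMeasure X) (f : X → ℝ) : ℝ :=
  ∫ x, f x ∂μ.toJordanDecomposition.posPart -
    ∫ x, f x ∂μ.toJordanDecomposition.negPart

/-- The Legendre–Fenchel transform `Λ*(μ) = sup_{w ∈ C(X)} (Λ(w) − ⟨w, μ⟩)`,
with values in `(−∞, +∞]` (realized inside `EReal`). -/
noncomputable def legendreStar {X : Type*} [TopologicalSpace X] [MeasurableSpace X]
    (Λ : C(X, ℝ) → ℝ) (μ : SignedMeasure X) : EReal :=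
  ⨆ w : C(X, ℝ), ((Λ w - sIntegral μ ⇑w : ℝ) : EReal)

lemma sIntegral_toSignedMeasure {X : Type*} [MeasurableSpace X]
    (μ : Measure X) [IsFiniteMeasure μ] (f : X → ℝ) :
    sIntegral μ.toSignedMeasure f = ∫ x, f x ∂μ := by
  have hJ : μ.toSignedMeasure.toJordanDecomposition
      = ⟨μ, 0, Measure.MutuallySingular.zero_right⟩ := by
    have : μ.toSignedMeasure
        = (⟨μ, 0, Measure.MutuallySingular.zero_right⟩ :
            JordanDecomposition X).toSignedMeasure := by
      simp [JordanDecomposition.toSignedMeasure]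
    rw [this, JordanDecomposition.toJordanDecomposition_toSignedMeasure]
  simp [sIntegral, hJ]

lemma concave_slope_le {g : ℝ → ℝ} (hg : ConcaveOn ℝ Set.univ g) {d : ℝ}
    (hd : HasDerivAt g d 0) : g 1 - g 0 ≤ d := by
  have h1 : Tendsto (slope g 0) (nhdsWithin 0 (Set.Ioi 0)) (nhds d) :=
    (hasDerivAt_iff_tendsto_slope.1 hd).mono_left
      (nhdsWithin_mono _ (fun x hx => ne_of_gt hx))
  refine ge_of_tendsto h1 ?_
  filter_upwards [Ioc_mem_nhdsGT_of_mem (Set.left_mem_Ico.2 zero_lt_one)] with t ht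
  have hcon := hg.2 (Set.mem_univ (0:ℝ)) (Set.mem_univ (1:ℝ))
    (show (0:ℝ) ≤ 1 - t by linarith [ht.2]) ht.1.le (by ring)
  simp only [smul_eq_mul, mul_zero, mul_one, zero_add] at hcon
  rw [slope_def_field, sub_zero, le_div_iff₀ ht.1]
  nlinarith [ht.1]

lemma concave_comp_line {X : Type*} [TopologicalSpace X]
    (Λ : C(X, ℝ) → ℝ) (hconc : ConcaveOn ℝ Set.univ Λ) (u v : C(X, ℝ)) :
    ConcaveOn ℝ Set.univ (fun t : ℝ => Λ (u + t • v)) := by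
  have := hconc.comp_affineMap (AffineMap.lineMap u (u + v) : ℝ →ᵃ[ℝ] C(X, ℝ))
  have heq : (fun t : ℝ => Λ (u + t • v))
      = Λ ∘ (AffineMap.lineMap u (u + v) : ℝ →ᵃ[ℝ] C(X, ℝ)) := by
    funext t
    simp [AffineMap.lineMap_apply, add_sub_cancel_left, add_comm]
  rw [heq]
  simpa using this

lemma cmap_integrable {X : Type*} [MetricSpace X] [CompactSpace X]
    [MeasurableSpace X] [BorelSpace X] (μ : Measure X) [IsFiniteMeasure μ]
    (f : C(X, ℝ)) : Integrable (⇑f) μ :=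
  f.continuous.integrable_of_hasCompactSupport
    (IsClosed.isCompact (isClosed_tsupport _))

/-- If `Λ : C(X) → ℝ` is concave and at every point Gateaux differentiable with
differential represented by a Borel probability measure, then for every `u ∈ C(X)`
the infimum of `μ ↦ Λ*(μ) + ⟨u, μ⟩` over Borel probability measures coincides with
the infimum over all finite signed Borel measures; both infima are attained and both
equal `Λ(u)`. -/
theorem legendre_inf_over_probability_eq_inf_over_signed
    {X : Type*} [MetricSpace X] [CompactSpace X]
    [MeasurableSpace X] [BorelSpace X]
    (Λ : C(X, ℝ) → ℝ) (hconc : ConcaveOn ℝ Set.univ Λ)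
    (hdiff : ∀ u : C(X, ℝ), ∃ μu : Measure X, IsProbabilityMeasure μu ∧
      ∀ v : C(X, ℝ), HasDerivAt (fun t : ℝ => Λ (u + t • v)) (∫ x, v x ∂μu) 0)
    (u : C(X, ℝ)) :
    (⨅ P : ProbabilityMeasure X,
        legendreStar Λ ((P : Measure X).toSignedMeasure) +
          ((∫ x, u x ∂(P : Measure X) : ℝ) : EReal)) = ((Λ u : ℝ) : EReal) ∧
    (⨅ ν : SignedMeasure X,
        legendreStar Λ ν + ((sIntegral ν ⇑u : ℝ) : EReal)) = ((Λ u : ℝ) : EReal) ∧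
    (∃ P : ProbabilityMeasure X,
        legendreStar Λ ((P : Measure X).toSignedMeasure) +
          ((∫ x, u x ∂(P : Measure X) : ℝ) : EReal) = ((Λ u : ℝ) : EReal)) ∧
    (∃ ν : SignedMeasure X,
        legendreStar Λ ν + ((sIntegral ν ⇑u : ℝ) : EReal) = ((Λ u : ℝ) : EReal)) := by
  obtain ⟨μ, hp, hder⟩ := hdiff u
  -- lower bound: for any signed measure ν
  have hle : ∀ ν : SignedMeasure X,
      ((Λ u : ℝ) : EReal) ≤ legendreStar Λ ν + ((sIntegral ν ⇑u : ℝ) : EReal) := by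
    intro ν
    have h1 : ((Λ u - sIntegral ν ⇑u : ℝ) : EReal) ≤ legendreStar Λ ν :=
      le_iSup (fun w : C(X, ℝ) => ((Λ w - sIntegral ν ⇑w : ℝ) : EReal)) u
    calc ((Λ u : ℝ) : EReal)
        = ((Λ u - sIntegral ν ⇑u : ℝ) : EReal) + ((sIntegral ν ⇑u : ℝ) : EReal) := by
          rw [← EReal.coe_add, sub_add_cancel]
      _ ≤ legendreStar Λ ν + ((sIntegral ν ⇑u : ℝ) : EReal) :=
          add_le_add_left h1 _
  -- key concavity inequality at the differential measure μ
  have key : ∀ w : C(X, ℝ), Λ w - Λ u ≤ ∫ x, w x ∂μ - ∫ x, u x ∂μ := by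
    intro w
    have hgd := hder (w - u)
    have hgc := concave_comp_line Λ hconc u (w - u)
    have h01 := concave_slope_le hgc hgd
    have e1 : u + (1 : ℝ) • (w - u) = w := by
      rw [one_smul, add_sub_cancel]
    have e0 : u + (0 : ℝ) • (w - u) = u := by
      rw [zero_smul, add_zero]
    rw [e1, e0] at h01
    have hint : ∫ x, (w - u) x ∂μ = ∫ x, w x ∂μ - ∫ x, u x ∂μ := by
      simp only [ContinuousMap.sub_apply]
      exact integral_sub (cmap_integrable μ w) (cmap_integrable μ u)
    linarith [h01, hint.le, hint.ge]
  -- the Legendre transform at μ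
  have heq : legendreStar Λ μ.toSignedMeasure = ((Λ u - ∫ x, u x ∂μ : ℝ) : EReal) := by
    refine le_antisymm (iSup_le fun w => ?_) ?_
    · rw [EReal.coe_le_coe_iff, sIntegral_toSignedMeasure]
      linarith [key w]
    · have := le_iSup
        (fun w : C(X, ℝ) => ((Λ w - sIntegral μ.toSignedMeasure ⇑w : ℝ) : EReal)) u
      rwa [sIntegral_toSignedMeasure] at this
  have hat : legendreStar Λ μ.toSignedMeasure + ((∫ x, u x ∂μ : ℝ) : EReal)
      = ((Λ u : ℝ) : EReal) := by
    rw [heq, ← EReal.coe_add, sub_add_cancel]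
  set P : ProbabilityMeasure X := ⟨μ, hp⟩ with hP
  have hPμ : (P : Measure X) = μ := rfl
  have hatP : legendreStar Λ ((P : Measure X).toSignedMeasure) +
      ((∫ x, u x ∂(P : Measure X) : ℝ) : EReal) = ((Λ u : ℝ) : EReal) := by
    exact hat
  have hatν : legendreStar Λ μ.toSignedMeasure +
      ((sIntegral μ.toSignedMeasure ⇑u : ℝ) : EReal) = ((Λ u : ℝ) : EReal) := by
    rw [sIntegral_toSignedMeasure]; exact hat
  refine ⟨?_, ?_, ⟨P, hatP⟩, ⟨μ.toSignedMeasure, hatν⟩⟩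
  · refine le_antisymm (iInf_le_of_le P hatP.le) (le_iInf fun Q => ?_)
    have := hle ((Q : Measure X).toSignedMeasure)
    rwa [sIntegral_toSignedMeasure] at this
  · exact le_antisymm (iInf_le_of_le μ.toSignedMeasure hatν.le) (le_iInf hle)
end

section
/- Let μ₀ be a probability measure on a measurable space X, and let μ⁰, μ¹ be probability measures on X which are absolutely continuous with respect to μ₀, with densities f₀ = dμ⁰/dμ₀ and f₁ = dμ¹/dμ₀, and with finite relative entropies D_{μ₀}(μ⁰) < ∞ and D_{μ₀}(μ¹) < ∞. Assume that f₁ = 0 holds μ₀-almost everywhere on the set {f₀ = 0}, and that the function (f₁ − f₀)·log f₀ is μ₀-integrable. For t ∈ [0,1] set μ^t := (1−t)·μ⁰ + t·μ¹. Then the right derivative at t = 0 of the (convex) function t ↦ D_{μ₀}(μ^t) exists and equals ∫_X (f₁ − f₀)·log f₀ dμ₀. -/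
open MeasureTheory Set Filter Topology

/-- Elementary tangent inequality for `u ↦ u * log u` at a point `a > 0`. -/
lemma mul_log_tangent_le (u a : ℝ) (hu : 0 ≤ u) (ha : 0 < a) :
    u * Real.log a + (u - a) ≤ u * Real.log u := by
  rcases eq_or_lt_of_le hu with h | h
  · rw [← h]; simpa using ha.le
  · have h1 : Real.log (a / u) ≤ a / u - 1 :=
      Real.log_le_sub_one_of_pos (div_pos ha h)
    have h2 : Real.log (a / u) = Real.log a - Real.log u :=
      Real.log_div ha.ne' h.ne'
    have h3 := mul_le_mul_of_nonneg_left h1 hu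
    rw [h2] at h3
    have h4 : u * (a / u - 1) = a - u := by field_simp
    nlinarith

/-- Derivative formula for the relative entropy along an affine segment of probability
measures: if `μ⁰, μ¹ ≪ μ₀` have densities `f₀, f₁` with finite relative entropies,
`f₁ = 0` a.e. on `{f₀ = 0}`, and `(f₁ − f₀)·log f₀` is `μ₀`-integrable, then the
right derivative at `t = 0` of `t ↦ D_{μ₀}((1−t)μ⁰ + tμ¹)` equals
`∫ (f₁ − f₀)·log f₀ dμ₀`. Here `D_{μ₀}(μ^t)` is expressed through the density
`(1−t)f₀ + tf₁` of `μ^t` with respect to `μ₀`. -/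
theorem relativeEntropy_hasDerivWithinAt_segment
    {X : Type*} [MeasurableSpace X]
    (μ₀ : Measure X) [IsProbabilityMeasure μ₀]
    (f₀ f₁ : X → ℝ) (hf₀m : Measurable f₀) (hf₁m : Measurable f₁)
    (hf₀0 : ∀ x, 0 ≤ f₀ x) (hf₁0 : ∀ x, 0 ≤ f₁ x)
    (hf₀i : Integrable f₀ μ₀) (hf₁i : Integrable f₁ μ₀)
    (hf₀1 : ∫ x, f₀ x ∂μ₀ = 1) (hf₁1 : ∫ x, f₁ x ∂μ₀ = 1)
    (hD₀ : Integrable (fun x => f₀ x * Real.log (f₀ x)) μ₀)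
    (hD₁ : Integrable (fun x => f₁ x * Real.log (f₁ x)) μ₀)
    (habs : ∀ᵐ x ∂μ₀, f₀ x = 0 → f₁ x = 0)
    (hint : Integrable (fun x => (f₁ x - f₀ x) * Real.log (f₀ x)) μ₀) :
    HasDerivWithinAt
      (fun t : ℝ => ∫ x, ((1 - t) * f₀ x + t * f₁ x) *
        Real.log ((1 - t) * f₀ x + t * f₁ x) ∂μ₀)
      (∫ x, (f₁ x - f₀ x) * Real.log (f₀ x) ∂μ₀) (Set.Ici 0) 0 := by
  -- notation
  set g : ℝ → X → ℝ := fun t x => (1 - t) * f₀ x + t * f₁ x with hg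
  set L : X → ℝ := fun x => (f₁ x - f₀ x) * (Real.log (f₀ x) + 1) with hL
  set q : ℝ → X → ℝ := fun t x =>
    (g t x * Real.log (g t x) - f₀ x * Real.log (f₀ x)) / t with hq
  -- integrability of L
  have hLint : Integrable L μ₀ := by
    have : Integrable (fun x => (f₁ x - f₀ x) * Real.log (f₀ x) + (f₁ x - f₀ x)) μ₀ :=
      hint.add (hf₁i.sub hf₀i)
    refine this.congr (Filter.Eventually.of_forall fun x => ?_)
    simp only [hL]; ring
  -- key pointwise bounds
  have key : ∀ x, (f₀ x = 0 → f₁ x = 0) → ∀ t : ℝ, t ∈ Ioc (0:ℝ) 1 →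
      L x ≤ q t x ∧ q t x ≤ f₁ x * Real.log (f₁ x) - f₀ x * Real.log (f₀ x) := by
    intro x hx t ht
    rcases eq_or_lt_of_le (hf₀0 x) with h0 | h0
    · have h1 : f₁ x = 0 := hx h0.symm
      have hg0 : g t x = 0 := by simp [hg, ← h0, h1]
      constructor
      · simp [hq, hL, hg0, ← h0, h1]
      · simp [hq, hg0, ← h0, h1]
    · have hgt0 : 0 ≤ g t x := by
        have : 0 ≤ (1 - t) * f₀ x := mul_nonneg (by linarith [ht.2]) (hf₀0 x)
        have : 0 ≤ t * f₁ x := mul_nonneg ht.1.le (hf₁0 x)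
        positivity
      have hgeq : g t x = f₀ x + t * (f₁ x - f₀ x) := by simp only [hg]; ring
      constructor
      · -- lower bound from tangent inequality
        have htan := mul_log_tangent_le (g t x) (f₀ x) hgt0 h0
        rw [hgeq] at htan
        simp only [hq, hL, hgeq]
        rw [le_div_iff₀ ht.1]
        nlinarith [htan]
      · -- upper bound from convexity
        have hcvx := Real.convexOn_mul_log.2 (mem_Ici.2 (hf₀0 x)) (mem_Ici.2 (hf₁0 x))
          (by linarith [ht.2] : (0:ℝ) ≤ 1 - t) ht.1.le (by ring)
        simp only [smul_eq_mul] at hcvx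
        have hgeq2 : (1 - t) * f₀ x + t * f₁ x = g t x := rfl
        rw [hgeq2] at hcvx
        simp only [hq]
        rw [div_le_iff₀ ht.1]
        nlinarith [hcvx]
  -- pointwise limits
  have hlim : ∀ x, (f₀ x = 0 → f₁ x = 0) →
      Tendsto (fun t => q t x) (𝓝[>] (0:ℝ)) (𝓝 (L x)) := by
    intro x hx
    rcases eq_or_lt_of_le (hf₀0 x) with h0 | h0
    · have h1 : f₁ x = 0 := hx h0.symm
      have : ∀ t : ℝ, q t x = 0 := by intro t; simp [hq, hg, ← h0, h1]
      simp only [this]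
      have : L x = 0 := by simp [hL, ← h0, h1]
      rw [this]; exact tendsto_const_nhds
    · -- f₀ x > 0 : use differentiability
      have hgder : HasDerivAt (fun t : ℝ => g t x) (f₁ x - f₀ x) 0 := by
        have h1 : HasDerivAt (fun t : ℝ => (1 - t) * f₀ x + t * f₁ x)
            ((-1) * f₀ x + 1 * f₁ x) 0 := by
          exact (((hasDerivAt_id (0:ℝ)).const_sub 1).mul_const (f₀ x)).add
            ((hasDerivAt_id (0:ℝ)).mul_const (f₁ x))
        simpa [hg] using h1.congr_deriv (by ring)
      have hphi : HasDerivAt (fun u : ℝ => u * Real.log u)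
          (Real.log (g 0 x) + 1) (g 0 x) := by
        apply Real.hasDerivAt_mul_log
        simp [hg]; exact h0.ne'
      have hcomp : HasDerivAt (fun t : ℝ => g t x * Real.log (g t x))
          ((Real.log (g 0 x) + 1) * (f₁ x - f₀ x)) 0 := by have := hphi.comp 0 hgder; exact this
      have hL' : (Real.log (g 0 x) + 1) * (f₁ x - f₀ x) = L x := by
        simp [hg, hL]; ring
      rw [hL'] at hcomp
      have hslope := hcomp.hasDerivWithinAt (s := Ioi (0:ℝ))
      rw [hasDerivWithinAt_iff_tendsto_slope] at hslope
      have hsub : Ioi (0:ℝ) \ {0} = Ioi 0 := by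
        rw [diff_singleton_eq_self]; simp
      rw [hsub] at hslope
      refine hslope.congr (fun t => ?_)
      simp only [slope_def_field, hq, hg]
      norm_num
  -- the bound function
  set B : X → ℝ := fun x =>
    |f₁ x * Real.log (f₁ x) - f₀ x * Real.log (f₀ x)| + |L x| with hB
  have hBint : Integrable B μ₀ := (hD₁.sub hD₀).abs.add hLint.abs
  -- measurability of q t
  have hqmeas : ∀ t : ℝ, AEStronglyMeasurable (fun x => q t x) μ₀ := by
    intro t
    have hgm : Measurable (fun x => g t x) :=
      ((hf₀m.const_mul _).add (hf₁m.const_mul _))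
    have : Measurable (fun x => q t x) := by
      apply Measurable.div_const
      exact ((hgm.mul (Real.measurable_log.comp hgm)).sub
        (hf₀m.mul (Real.measurable_log.comp hf₀m)))
    exact this.aestronglyMeasurable
  -- dominated convergence
  have hdom : Tendsto (fun t => ∫ x, q t x ∂μ₀) (𝓝[>] (0:ℝ))
      (𝓝 (∫ x, L x ∂μ₀)) := by
    apply tendsto_integral_filter_of_dominated_convergence B
    · exact Filter.Eventually.of_forall fun t => hqmeas t
    · filter_upwards [Ioc_mem_nhdsGT (zero_lt_one (α := ℝ))] with t ht
      filter_upwards [habs] with x hx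
      have hk := key x hx t ht
      rw [Real.norm_eq_abs]
      calc |q t x| ≤ max |L x| |f₁ x * Real.log (f₁ x) - f₀ x * Real.log (f₀ x)| :=
            abs_le_max_abs_abs hk.1 hk.2
        _ ≤ B x := by rw [hB]; exact max_le (le_add_of_nonneg_left (abs_nonneg _)) (le_add_of_nonneg_right (abs_nonneg _))
    · exact hBint
    · filter_upwards [habs] with x hx
      exact hlim x hx
  -- identify the limit
  have hLeq : ∫ x, L x ∂μ₀ = ∫ x, (f₁ x - f₀ x) * Real.log (f₀ x) ∂μ₀ := by
    have h1 : ∫ x, L x ∂μ₀ =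
        ∫ x, ((f₁ x - f₀ x) * Real.log (f₀ x) + (f₁ x - f₀ x)) ∂μ₀ := by
      apply integral_congr_ae
      refine Filter.Eventually.of_forall fun x => ?_
      simp only [hL]; ring
    have h2 := integral_add hint (hf₁i.sub hf₀i)
    simp only [Pi.sub_apply] at h2
    rw [h1, h2, integral_sub hf₁i hf₀i, hf₀1, hf₁1]
    ring
  -- conclude
  rw [hasDerivWithinAt_iff_tendsto_slope, Set.Ici_sdiff_left, ← hLeq]
  refine hdom.congr' ?_
  filter_upwards [Ioc_mem_nhdsGT (zero_lt_one (α := ℝ))] with t ht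
  -- integrability of q t
  have hqbd : ∀ᵐ x ∂μ₀, ‖q t x‖ ≤ B x := by
    filter_upwards [habs] with x hx
    have hk := key x hx t ht
    rw [Real.norm_eq_abs]
    calc |q t x| ≤ max |L x| |f₁ x * Real.log (f₁ x) - f₀ x * Real.log (f₀ x)| :=
          abs_le_max_abs_abs hk.1 hk.2
      _ ≤ B x := by rw [hB]; exact max_le (le_add_of_nonneg_left (abs_nonneg _)) (le_add_of_nonneg_right (abs_nonneg _))
  have hqint : Integrable (fun x => q t x) μ₀ := hBint.mono' (hqmeas t) hqbd
  have hφgt : Integrable (fun x => g t x * Real.log (g t x)) μ₀ := by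
    have h2 : Integrable (fun x => t * q t x + f₀ x * Real.log (f₀ x)) μ₀ :=
      (hqint.const_mul t).add hD₀
    refine h2.congr (Filter.Eventually.of_forall fun x => ?_)
    simp only [hq]
    rw [mul_div_cancel₀ _ ht.1.ne']
    ring
  -- compute slope
  have : ∫ x, q t x ∂μ₀ =
      ((∫ x, g t x * Real.log (g t x) ∂μ₀) - ∫ x, f₀ x * Real.log (f₀ x) ∂μ₀) / t := by
    rw [← integral_sub hφgt hD₀, ← integral_div]
  rw [this, slope_def_field]
  have hH0 : (∫ x, g 0 x * Real.log (g 0 x) ∂μ₀) = ∫ x, f₀ x * Real.log (f₀ x) ∂μ₀ := by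
    apply integral_congr_ae
    refine Filter.Eventually.of_forall fun x => ?_
    simp [hg]
  rw [hH0]
  norm_num
  rfl
end

section
/- Let μ₀ be a probability measure on a measurable space X, let γ > 0, and let u, v : X → ℝ be measurable functions such that for some ε > 0 one has ∫_X e^{−γ(u + t·v)} dμ₀ < ∞ for all t ∈ [0, ε), and such that v·e^{−γu} is μ₀-integrable. Define L(t) := −(1/γ)·log ∫_X e^{−γ(u + t·v)} dμ₀ for t ∈ [0, ε). Then the right derivative of L at t = 0 exists and equals (∫_X v·e^{−γu} dμ₀) / (∫_X e^{−γu} dμ₀). -/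
open MeasureTheory

private lemma expQuot_lower (a c t : ℝ) (ha : 0 ≤ a) (ht : 0 < t) :
    a * c ≤ (a * Real.exp (t * c) - a) / t := by
  rw [le_div_iff₀ ht]
  have h := Real.add_one_le_exp (t * c)
  nlinarith

private lemma expQuot_upper (a c t t₀ : ℝ) (ha : 0 ≤ a) (ht : 0 < t) (htt : t ≤ t₀) :
    (a * Real.exp (t * c) - a) / t ≤ (a * Real.exp (t₀ * c) - a) / t₀ := by
  have ht₀ : 0 < t₀ := lt_of_lt_of_le ht htt
  rw [div_le_div_iff₀ ht ht₀]
  have h : Real.exp (((t₀ - t) / t₀) * 0 + (t / t₀) * (t₀ * c)) ≤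
      ((t₀ - t) / t₀) * Real.exp 0 + (t / t₀) * Real.exp (t₀ * c) :=
    convexOn_exp.2 (Set.mem_univ _) (Set.mem_univ _)
      (div_nonneg (by linarith) ht₀.le) (by positivity) (by field_simp; ring)
  have harg : ((t₀ - t) / t₀) * 0 + (t / t₀) * (t₀ * c) = t * c := by field_simp; ring
  rw [harg, Real.exp_zero, mul_one] at h
  have h3 := mul_le_mul_of_nonneg_left h ha
  have h4 := mul_le_mul_of_nonneg_right h3 ht₀.le
  have h5 : a * ((t₀ - t) / t₀ + t / t₀ * Real.exp (t₀ * c)) * t₀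
      = a * (t₀ - t) + a * t * Real.exp (t₀ * c) := by
    field_simp
  rw [h5] at h4
  nlinarith

private lemma absQuot_le (a c t t₀ : ℝ) (ha : 0 < a) (ht : 0 < t) (htt : t ≤ t₀) :
    |(a * Real.exp (t * c) - a) / t| ≤ |(a * Real.exp (t₀ * c) - a) / t₀| + |a * c| := by
  have h1 := expQuot_lower a c t ha.le ht
  have h2 := expQuot_upper a c t t₀ ha.le ht htt
  have h3 := neg_abs_le (a * c)
  have h4 := le_abs_self ((a * Real.exp (t₀ * c) - a) / t₀)
  have h5 := abs_nonneg ((a * Real.exp (t₀ * c) - a) / t₀)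
  have h6 := abs_nonneg (a * c)
  rw [abs_le]
  constructor <;> linarith

/-- Derivative formula for `𝓛_γ⁻` along an affine segment: if
`∫ e^{−γ(u+tv)} dμ₀ < ∞` for `t ∈ [0, ε)` and `v·e^{−γu}` is `μ₀`-integrable, then
`t ↦ −(1/γ)·log ∫ e^{−γ(u+tv)} dμ₀` has right derivative at `t = 0` equal to
`(∫ v·e^{−γu} dμ₀) / (∫ e^{−γu} dμ₀)`. -/
theorem hasDerivWithinAt_logExpFunctional
    {X : Type*} [MeasurableSpace X]
    (μ₀ : Measure X) [IsProbabilityMeasure μ₀]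
    (γ : ℝ) (hγ : 0 < γ)
    (u v : X → ℝ) (hu : Measurable u) (hv : Measurable v)
    (ε : ℝ) (hε : 0 < ε)
    (hint : ∀ t ∈ Set.Ico (0 : ℝ) ε,
      Integrable (fun x => Real.exp (-γ * (u x + t * v x))) μ₀)
    (hvi : Integrable (fun x => v x * Real.exp (-γ * u x)) μ₀) :
    HasDerivWithinAt
      (fun t : ℝ =>
        -(1 / γ) * Real.log (∫ x, Real.exp (-γ * (u x + t * v x)) ∂μ₀))
      ((∫ x, v x * Real.exp (-γ * u x) ∂μ₀) / (∫ x, Real.exp (-γ * u x) ∂μ₀))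
      (Set.Ici 0) 0 := by
  have hεhalf : (0:ℝ) < ε / 2 := by positivity
  have hεhalf' : ε / 2 < ε := by linarith
  have h0 : Integrable (fun x => Real.exp (-γ * u x)) μ₀ := by
    simpa using hint 0 ⟨le_rfl, hε⟩
  have hexp : ∀ (s : ℝ) (x : X), Real.exp (-γ * (u x + s * v x))
      = Real.exp (-γ * u x) * Real.exp (s * (-γ * v x)) := by
    intro s x
    rw [← Real.exp_add]
    congr 1
    ring
  -- difference quotients, limit, and dominating function
  set Fq : ℝ → X → ℝ := fun t x =>
    (Real.exp (-γ * (u x + t * v x)) - Real.exp (-γ * u x)) / t with hFq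
  set f : X → ℝ := fun x => -γ * (v x * Real.exp (-γ * u x)) with hf
  set A : X → ℝ := fun x =>
    (Real.exp (-γ * (u x + (ε/2) * v x)) - Real.exp (-γ * u x)) / (ε/2) with hA
  have hbound_int : Integrable (fun x => |A x| + |f x|) μ₀ :=
    ((((hint (ε/2) ⟨hεhalf.le, hεhalf'⟩).sub h0).div_const (ε/2)).abs).add
      ((hvi.const_mul (-γ)).abs)
  have hbound : ∀ t ∈ Set.Ioo (0:ℝ) (ε/2), ∀ x, |Fq t x| ≤ |A x| + |f x| := by
    intro t ht x
    have e1 : Fq t x = (Real.exp (-γ * u x) * Real.exp (t * (-γ * v x))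
        - Real.exp (-γ * u x)) / t := by
      simp only [hFq, hexp t x]
    have e2 : A x = (Real.exp (-γ * u x) * Real.exp ((ε/2) * (-γ * v x))
        - Real.exp (-γ * u x)) / (ε/2) := by
      simp only [hA, hexp (ε/2) x]
    have e3 : f x = -(Real.exp (-γ * u x) * (-γ * v x)) * (-1) := by
      simp only [hf]; ring
    rw [e1, e2, e3]
    have := absQuot_le (Real.exp (-γ * u x)) (-γ * v x) t (ε/2)
      (Real.exp_pos _) ht.1 ht.2.le
    calc |(Real.exp (-γ * u x) * Real.exp (t * (-γ * v x)) - Real.exp (-γ * u x)) / t|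
        ≤ |(Real.exp (-γ * u x) * Real.exp ((ε/2) * (-γ * v x)) - Real.exp (-γ * u x)) / (ε/2)|
          + |Real.exp (-γ * u x) * (-γ * v x)| := this
      _ = _ := by rw [abs_mul, abs_mul, abs_neg, abs_mul]; simp [abs_mul]
  -- pointwise limit of difference quotients
  have hlim : ∀ x, Filter.Tendsto (fun t => Fq t x) (nhdsWithin 0 (Set.Ioi 0))
      (nhds (f x)) := by
    intro x
    have hd : HasDerivAt (fun t : ℝ => Real.exp (-γ * (u x + t * v x))) (f x) 0 := by
      have h1 : HasDerivAt (fun t : ℝ => -γ * (u x + t * v x)) (-γ * v x) 0 := by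
        simpa using (((hasDerivAt_id (0:ℝ)).mul_const (v x)).const_add (u x)).const_mul (-γ)
      have h2 := h1.exp
      convert h2 using 1
      simp only [hf, zero_mul, add_zero]
      ring
    have h3 : Filter.Tendsto (slope (fun t : ℝ => Real.exp (-γ * (u x + t * v x))) 0)
        (nhdsWithin 0 (Set.Ioi 0)) (nhds (f x)) :=
      (hasDerivAt_iff_tendsto_slope.mp hd).mono_left
        (nhdsWithin_mono _ (fun y hy => ne_of_gt hy))
    refine h3.congr' ?_
    filter_upwards [self_mem_nhdsWithin] with t _
    simp only [slope_def_field, hFq, zero_mul, add_zero, sub_zero]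
  -- dominated convergence
  have key : Filter.Tendsto (fun t => ∫ x, Fq t x ∂μ₀) (nhdsWithin 0 (Set.Ioi 0))
      (nhds (∫ x, f x ∂μ₀)) := by
    refine tendsto_integral_filter_of_dominated_convergence (fun x => |A x| + |f x|)
      ?_ ?_ hbound_int ?_
    · filter_upwards with t
      exact ((((hu.add (hv.const_mul t)).const_mul (-γ)).exp.sub
        ((hu.const_mul (-γ)).exp)).div_const t).aestronglyMeasurable
    · filter_upwards [Ioo_mem_nhdsGT_of_mem ⟨le_rfl, hεhalf⟩] with t ht
      filter_upwards with x
      exact hbound t ht x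
    · filter_upwards with x
      exact hlim x
  have hfint : (∫ x, f x ∂μ₀)
      = -γ * ∫ x, v x * Real.exp (-γ * u x) ∂μ₀ := by
    simp only [hf]
    rw [integral_const_mul]
  -- the integral functional has right derivative -γ·I at 0
  set F : ℝ → ℝ := fun t => ∫ x, Real.exp (-γ * (u x + t * v x)) ∂μ₀ with hFdef
  have hF00 : F 0 = ∫ x, Real.exp (-γ * u x) ∂μ₀ := by
    simp only [hFdef, zero_mul, add_zero]
  have hF : HasDerivWithinAt F (-γ * ∫ x, v x * Real.exp (-γ * u x) ∂μ₀)
      (Set.Ici 0) 0 := by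
    rw [hasDerivWithinAt_iff_tendsto_slope, Set.Ici_sdiff_left]
    rw [← hfint]
    refine key.congr' ?_
    filter_upwards [Ioo_mem_nhdsGT_of_mem ⟨le_rfl, hεhalf⟩] with t ht
    have hti : Integrable (fun x => Real.exp (-γ * (u x + t * v x))) μ₀ :=
      hint t ⟨ht.1.le, lt_trans ht.2 hεhalf'⟩
    have : (∫ x, Fq t x ∂μ₀) = (F t - F 0) / t := by
      simp only [hFq, integral_div]
      rw [integral_sub hti h0, hF00, hFdef]
    rw [this, slope_def_field, sub_zero]
  -- positivity of the denominator
  have hF0pos : 0 < F 0 := by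
    rw [hF00]
    exact integral_exp_pos (by simpa using h0)
  -- chain rule
  have hlog := hF.log hF0pos.ne'
  have := hlog.const_mul (-(1/γ))
  have heq : -(1/γ) * ((-γ * ∫ x, v x * Real.exp (-γ * u x) ∂μ₀) / F 0)
      = (∫ x, v x * Real.exp (-γ * u x) ∂μ₀) / (∫ x, Real.exp (-γ * u x) ∂μ₀) := by
    rw [hF00]
    field_simp
  rw [heq] at this
  exact this
end

section
/- Let μ₀ be a probability measure on a measurable space X, and let μ⁰, μ¹ be probability measures on X absolutely continuous with respect to μ₀, with densities f₀ = dμ⁰/dμ₀ and f₁ = dμ¹/dμ₀ and finite relative entropies D_{μ₀}(μ⁰) < ∞ and D_{μ₀}(μ¹) < ∞. Assume f₁ = 0 μ₀-almost everywhere on {f₀ = 0} and that (f₁ − f₀)·log f₀ is μ₀-integrable. Then D_{μ₀}(μ¹) ≥ D_{μ₀}(μ⁰) + ∫_X (f₁ − f₀)·log f₀ dμ₀ (the gradient inequality for the relative entropy along the affine segment from μ⁰ to μ¹, which the paper derives from the derivative formula for D together with its convexity). -/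
open MeasureTheory

/-- Gradient inequality for the relative entropy: under the same hypotheses as the
derivative formula for `t ↦ D_{μ₀}((1−t)μ⁰ + tμ¹)`, one has
`D_{μ₀}(μ¹) ≥ D_{μ₀}(μ⁰) + ∫ (f₁ − f₀)·log f₀ dμ₀`,
where `f₀, f₁` are the densities of `μ⁰, μ¹` with respect to `μ₀`. -/
theorem relativeEntropy_gradient_inequality
    {X : Type*} [MeasurableSpace X]
    (μ₀ : Measure X) [IsProbabilityMeasure μ₀]
    (f₀ f₁ : X → ℝ) (hf₀m : Measurable f₀) (hf₁m : Measurable f₁)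
    (hf₀0 : ∀ x, 0 ≤ f₀ x) (hf₁0 : ∀ x, 0 ≤ f₁ x)
    (hf₀i : Integrable f₀ μ₀) (hf₁i : Integrable f₁ μ₀)
    (hf₀1 : ∫ x, f₀ x ∂μ₀ = 1) (hf₁1 : ∫ x, f₁ x ∂μ₀ = 1)
    (hD₀ : Integrable (fun x => f₀ x * Real.log (f₀ x)) μ₀)
    (hD₁ : Integrable (fun x => f₁ x * Real.log (f₁ x)) μ₀)
    (habs : ∀ᵐ x ∂μ₀, f₀ x = 0 → f₁ x = 0)
    (hint : Integrable (fun x => (f₁ x - f₀ x) * Real.log (f₀ x)) μ₀) :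
    ∫ x, f₀ x * Real.log (f₀ x) ∂μ₀ + ∫ x, (f₁ x - f₀ x) * Real.log (f₀ x) ∂μ₀ ≤
      ∫ x, f₁ x * Real.log (f₁ x) ∂μ₀ := by
  -- f₁ * log f₀ is integrable as the sum of the two integrable functions
  have hI : Integrable (fun x => f₁ x * Real.log (f₀ x)) μ₀ := by
    have := hint.add hD₀
    convert this using 1
    swap
    funext x
    simp only [Pi.add_apply]
    ring
    rfl
  -- the left side equals ∫ f₁ log f₀
  have hLHS : ∫ x, f₀ x * Real.log (f₀ x) ∂μ₀ + ∫ x, (f₁ x - f₀ x) * Real.log (f₀ x) ∂μ₀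
      = ∫ x, f₁ x * Real.log (f₀ x) ∂μ₀ := by
    rw [← integral_add hD₀ hint]
    congr 1
    funext x
    ring
  rw [hLHS]
  -- pointwise Gibbs inequality
  have hpt : ∀ᵐ x ∂μ₀, f₁ x - f₀ x ≤ f₁ x * Real.log (f₁ x) - f₁ x * Real.log (f₀ x) := by
    filter_upwards [habs] with x hx
    rcases eq_or_lt_of_le (hf₁0 x) with h1 | h1
    · simp [← h1, hf₀0 x]
    · have h0 : 0 < f₀ x := by
        rcases eq_or_lt_of_le (hf₀0 x) with h0 | h0
        · exact absurd (hx h0.symm) (ne_of_gt h1)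
        · exact h0
      have hlog := Real.log_le_sub_one_of_pos (div_pos h0 h1)
      rw [Real.log_div (ne_of_gt h0) (ne_of_gt h1)] at hlog
      have hmul := mul_le_mul_of_nonneg_left hlog h1.le
      have hdc : f₁ x * (f₀ x / f₁ x) = f₀ x := by field_simp
      nlinarith [hmul, hdc]
  have hsub : Integrable (fun x => f₁ x * Real.log (f₁ x) - f₁ x * Real.log (f₀ x)) μ₀ :=
    hD₁.sub hI
  have hd : Integrable (fun x => f₁ x - f₀ x) μ₀ := hf₁i.sub hf₀i
  have := integral_mono_ae hd hsub hpt
  rw [integral_sub hf₁i hf₀i, integral_sub hD₁ hI, hf₀1, hf₁1] at this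
  linarith
end

section
/- Let X be a compact metric space, μ₀ and μ Borel probability measures on X, and γ > 0. Let u : X → ℝ be an upper semicontinuous function with ∫_X e^{−γu} dμ₀ < ∞ and with u integrable with respect to μ. Suppose that μ is the Gibbs measure of u, i.e. μ is absolutely continuous with respect to μ₀ with density e^{−γu} / ∫_X e^{−γu} dμ₀. Then the supremum over w ∈ C(X) of N(w) := −(1/γ)·log ∫_X e^{−γw} dμ₀ − ∫_X w dμ is attained by u, i.e. sup_{w ∈ C(X)} N(w) = −(1/γ)·log ∫_X e^{−γu} dμ₀ − ∫_X u dμ. -/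
open MeasureTheory Filter Topology NNReal ENNReal

/-- Jensen's inequality for `exp`. -/
lemma jensen_exp_aux {X : Type*} [MeasurableSpace X] (μ : Measure X) [IsProbabilityMeasure μ]
    (f : X → ℝ) (hf : Integrable f μ) (hef : Integrable (fun x => Real.exp (f x)) μ) :
    Real.exp (∫ x, f x ∂μ) ≤ ∫ x, Real.exp (f x) ∂μ := by
  set m := ∫ x, f x ∂μ with hm
  have h1 : ∀ x, Real.exp m * (1 + (f x - m)) ≤ Real.exp (f x) := by
    intro x
    have h2 := Real.add_one_le_exp (f x - m)
    have h3 : Real.exp m * (1 + (f x - m)) ≤ Real.exp m * Real.exp (f x - m) :=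
      mul_le_mul_of_nonneg_left (by linarith) (Real.exp_pos m).le
    refine h3.trans_eq ?_
    rw [← Real.exp_add]
    congr 1
    ring
  have hint : Integrable (fun x => Real.exp m * (1 + (f x - m))) μ :=
    ((integrable_const (1:ℝ)).add (hf.sub (integrable_const m))).const_mul _
  have key : ∫ x, Real.exp m * (1 + (f x - m)) ∂μ = Real.exp m := by
    have hsub : Integrable (fun x => f x - m) μ := hf.sub (integrable_const m)
    rw [integral_const_mul, integral_add (integrable_const 1) hsub,
      integral_sub hf (integrable_const m), integral_const, integral_const]
    simp [← hm]
  calc Real.exp m = ∫ x, Real.exp m * (1 + (f x - m)) ∂μ := key.symm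
  _ ≤ ∫ x, Real.exp (f x) ∂μ := integral_mono hint hef h1

/-- One-sided `L¹` approximation of an upper semicontinuous function on a compact metric
space by continuous functions from above, via sup-convolution. -/
lemma usc_approx_aux {X : Type*} [MetricSpace X] [CompactSpace X] [Nonempty X]
    [MeasurableSpace X] [BorelSpace X]
    (μ : Measure X) [IsFiniteMeasure μ]
    (u : X → ℝ) (husc : UpperSemicontinuous u) (hui : Integrable u μ)
    (ε : ℝ) (hε : 0 < ε) :
    ∃ w : C(X, ℝ), (∀ x, u x ≤ w x) ∧ ∫ x, w x ∂μ ≤ (∫ x, u x ∂μ) + ε := by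
  obtain ⟨M, hM⟩ : ∃ M : ℝ, ∀ x, u x ≤ M := by
    obtain ⟨t, ht⟩ := isCompact_univ.elim_finite_subcover
      (fun n : ℕ => u ⁻¹' Set.Iio (n : ℝ)) (fun n => husc.isOpen_preimage _)
      (fun x _ => by
        obtain ⟨n, hn⟩ := exists_nat_gt (u x)
        exact Set.mem_iUnion.2 ⟨n, hn⟩)
    refine ⟨((t.sup id : ℕ) : ℝ), fun x => ?_⟩
    obtain ⟨n, hnt, hn⟩ := Set.mem_iUnion₂.1 (ht (Set.mem_univ x))
    have h2 : (n : ℝ) ≤ ((t.sup id : ℕ) : ℝ) := Nat.cast_le.2 (Finset.le_sup (f := id) hnt)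
    exact le_trans (le_of_lt hn) h2
  set v : ℕ → X → ℝ := fun n x => ⨆ y, (u y - n * dist x y) with hv
  have bdd : ∀ (n : ℕ) (x : X), BddAbove (Set.range fun y => u y - n * dist x y) := by
    intro n x
    refine ⟨M, ?_⟩
    rintro _ ⟨y, rfl⟩
    have h1 : (0:ℝ) ≤ n * dist x y := by positivity
    have h2 := hM y
    dsimp
    linarith
  have h_ge : ∀ n x, u x ≤ v n x := by
    intro n x
    have := le_ciSup (bdd n x) x
    simpa using this
  have h_lip : ∀ (n : ℕ) (x x' : X), v n x ≤ v n x' + n * dist x x' := by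
    intro n x x'
    refine ciSup_le fun y => ?_
    have h1 : u y - n * dist x' y ≤ v n x' := le_ciSup (bdd n x') y
    have h2 : dist x' y - dist x' x ≤ dist x y := by
      have := dist_triangle x' x y; linarith
    have h3 : (n:ℝ) * (dist x' y - dist x' x) ≤ n * dist x y :=
      mul_le_mul_of_nonneg_left h2 (Nat.cast_nonneg n)
    have h4 : dist x' x = dist x x' := dist_comm _ _
    nlinarith
  have h_cont : ∀ n : ℕ, Continuous (v n) := by
    intro n
    have : LipschitzWith (n : ℝ≥0) (v n) := by
      apply LipschitzWith.of_le_add_mul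
      intro x x'
      simpa using h_lip n x x'
    exact this.continuous
  have h_anti : ∀ (x : X) {m n : ℕ}, m ≤ n → v n x ≤ v m x := by
    intro x m n hmn
    refine ciSup_le fun y => ?_
    refine le_trans ?_ (le_ciSup (bdd m x) y)
    have : (m:ℝ) * dist x y ≤ (n:ℝ) * dist x y :=
      mul_le_mul_of_nonneg_right (Nat.cast_le.2 hmn) dist_nonneg
    linarith
  have h_tendsto : ∀ x, Tendsto (fun n => v n x) atTop (𝓝 (u x)) := by
    intro x
    rw [Metric.tendsto_atTop]
    intro δ hδ
    have husc' := husc x (u x + δ/2) (by linarith)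
    rw [Metric.eventually_nhds_iff] at husc'
    obtain ⟨r, hr, hru⟩ := husc'
    refine ⟨⌈(M - u x) / r⌉₊, fun n hn => ?_⟩
    have hnr : M - u x ≤ n * r := by
      have h1 : ((M - u x) / r) ≤ (n : ℝ) :=
        le_trans (Nat.le_ceil _) (Nat.cast_le.2 hn)
      calc M - u x = ((M - u x)/r) * r := by field_simp
      _ ≤ n * r := mul_le_mul_of_nonneg_right h1 hr.le
    have hub : v n x ≤ u x + δ/2 := by
      refine ciSup_le fun y => ?_
      by_cases hy : dist y x < r
      · have h1 := hru hy
        have h0 : (0:ℝ) ≤ n * dist x y := by positivity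
        linarith
      · push_neg at hy
        have h1 : (n:ℝ) * r ≤ n * dist x y := by
          rw [dist_comm x y]
          exact mul_le_mul_of_nonneg_left hy (Nat.cast_nonneg n)
        have h2 := hM y
        linarith
    have hlb := h_ge n x
    have habs : |v n x - u x| ≤ δ/2 := abs_le.2 ⟨by linarith, by linarith⟩
    calc dist (v n x) (u x) = |v n x - u x| := Real.dist_eq _ _
    _ ≤ δ/2 := habs
    _ < δ := by linarith
  have hint : ∀ f : X → ℝ, Continuous f → Integrable f μ := fun f hf =>
    hf.integrable_of_hasCompactSupport (isClosed_tsupport _).isCompact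
  have hbound : Integrable (fun x => |u x| + |v 0 x|) μ :=
    hui.abs.add (hint (v 0) (h_cont 0)).abs
  have hDCT : Tendsto (fun n => ∫ x, v n x ∂μ) atTop (𝓝 (∫ x, u x ∂μ)) := by
    refine tendsto_integral_of_dominated_convergence _
      (fun n => (h_cont n).aestronglyMeasurable) hbound ?_ ?_
    · intro n
      filter_upwards with x
      have h1 := h_ge n x
      have h2 := h_anti x (Nat.zero_le n)
      have h3 := le_abs_self (v 0 x)
      have h4 := neg_abs_le (u x)
      rw [Real.norm_eq_abs, abs_le]
      exact ⟨by linarith [abs_nonneg (v 0 x)], by linarith [abs_nonneg (u x)]⟩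
    · filter_upwards with x using h_tendsto x
  obtain ⟨n, hn⟩ := (hDCT.eventually_lt_const (lt_add_of_pos_right _ hε)).exists
  exact ⟨⟨v n, h_cont n⟩, h_ge n, hn.le⟩

/-- If `μ` is the Gibbs measure of `u`, i.e. `dμ = e^{−γu}/(∫ e^{−γu} dμ₀) dμ₀`,
then the supremum over continuous `w` of
`N(w) = −(1/γ)·log ∫ e^{−γw} dμ₀ − ∫ w dμ` equals the value of the same expression
evaluated at the upper semicontinuous function `u`. -/
theorem gibbs_measure_attains_sup
    {X : Type*} [MetricSpace X] [CompactSpace X]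
    [MeasurableSpace X] [BorelSpace X]
    (μ₀ μ : Measure X) [IsProbabilityMeasure μ₀] [IsProbabilityMeasure μ]
    (γ : ℝ) (hγ : 0 < γ) (u : X → ℝ) (husc : UpperSemicontinuous u)
    (hexp : Integrable (fun x => Real.exp (-γ * u x)) μ₀)
    (hui : Integrable u μ)
    (hgibbs : μ = μ₀.withDensity (fun x =>
      ENNReal.ofReal (Real.exp (-γ * u x) / ∫ y, Real.exp (-γ * u y) ∂μ₀))) :
    (⨆ w : C(X, ℝ),
        ((-(1 / γ) * Real.log (∫ x, Real.exp (-γ * w x) ∂μ₀)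
            - ∫ x, w x ∂μ : ℝ) : EReal)) =
      ((-(1 / γ) * Real.log (∫ x, Real.exp (-γ * u x) ∂μ₀)
          - ∫ x, u x ∂μ : ℝ) : EReal) := by
  have hXne : Nonempty X := by
    by_contra h
    rw [not_nonempty_iff] at h
    have h1 : μ Set.univ = 1 := measure_univ
    rw [Set.univ_eq_empty_iff.2 h] at h1
    simp at h1
  set Z := ∫ y, Real.exp (-γ * u y) ∂μ₀ with hZdef
  have hu_meas : Measurable u := husc.measurable
  have hZpos : 0 < Z := by
    rw [hZdef, integral_pos_iff_support_of_nonneg (fun x => (Real.exp_pos _).le) hexp]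
    have h1 : (Function.support fun x => Real.exp (-γ * u x)) = Set.univ := by
      ext x; simp [Real.exp_ne_zero]
    rw [h1, measure_univ]
    exact zero_lt_one
  have hd_meas : Measurable fun x => Real.toNNReal (Real.exp (-γ * u x) / Z) :=
    (((hu_meas.const_mul (-γ)).exp).div_const Z).real_toNNReal
  have hμeq : μ = μ₀.withDensity
      fun x => ((Real.toNNReal (Real.exp (-γ * u x) / Z) : ℝ≥0) : ℝ≥0∞) := by
    rw [hgibbs]; rfl
  have hCoM : ∀ g : X → ℝ,
      ∫ x, g x ∂μ = ∫ x, (Real.exp (-γ * u x) / Z) * g x ∂μ₀ := by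
    intro g
    rw [hμeq, integral_withDensity_eq_integral_smul hd_meas]
    refine integral_congr_ae (Eventually.of_forall fun x => ?_)
    show (Real.exp (-γ * u x) / Z).toNNReal • g x = Real.exp (-γ * u x) / Z * g x
    rw [NNReal.smul_def, smul_eq_mul, Real.coe_toNNReal _ (by positivity)]
  have hIoM : ∀ g : X → ℝ, Integrable (fun x => (Real.exp (-γ * u x) / Z) * g x) μ₀ →
      Integrable g μ := by
    intro g hg
    rw [hμeq, integrable_withDensity_iff_integrable_smul hd_meas]
    refine hg.congr (Eventually.of_forall fun x => ?_)
    show Real.exp (-γ * u x) / Z * g x = (Real.exp (-γ * u x) / Z).toNNReal • g x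
    rw [NNReal.smul_def, smul_eq_mul, Real.coe_toNNReal _ (by positivity)]
  have hint0 : ∀ f : X → ℝ, Continuous f → Integrable f μ₀ := fun f hf =>
    hf.integrable_of_hasCompactSupport (isClosed_tsupport _).isCompact
  have hintμ : ∀ f : X → ℝ, Continuous f → Integrable f μ := fun f hf =>
    hf.integrable_of_hasCompactSupport (isClosed_tsupport _).isCompact
  set F : C(X, ℝ) → ℝ := fun w =>
    -(1 / γ) * Real.log (∫ x, Real.exp (-γ * w x) ∂μ₀) - ∫ x, w x ∂μ with hF
  have key_le : ∀ w : C(X, ℝ),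
      F w ≤ -(1 / γ) * Real.log Z - ∫ x, u x ∂μ := by
    intro w
    have hwc : Continuous fun x => Real.exp (-γ * w x) :=
      Real.continuous_exp.comp (continuous_const.mul w.continuous)
    have hAint : Integrable (fun x => Real.exp (-γ * w x)) μ₀ := hint0 _ hwc
    set A := ∫ x, Real.exp (-γ * w x) ∂μ₀ with hA
    have hApos : 0 < A := by
      rw [hA, integral_pos_iff_support_of_nonneg (fun x => (Real.exp_pos _).le) hAint]
      have h1 : (Function.support fun x => Real.exp (-γ * w x)) = Set.univ := by
        ext x; simp [Real.exp_ne_zero]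
      rw [h1, measure_univ]
      exact zero_lt_one
    have hform : ∀ x, (Real.exp (-γ * u x) / Z) * Real.exp (γ * (u x - w x))
        = Real.exp (-γ * w x) / Z := by
      intro x
      rw [div_mul_eq_mul_div, ← Real.exp_add]
      congr 2
      ring
    have hEint : Integrable (fun x => Real.exp (γ * (u x - w x))) μ :=
      hIoM _ ((hAint.div_const Z).congr (Eventually.of_forall fun x => (hform x).symm))
    have hwint : Integrable (fun x => w x) μ := hintμ _ w.continuous
    have hfint : Integrable (fun x => γ * (u x - w x)) μ := (hui.sub hwint).const_mul γ
    have hEval : ∫ x, Real.exp (γ * (u x - w x)) ∂μ = A / Z := by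
      rw [hCoM]
      simp_rw [hform]
      rw [integral_div]
    have hj := jensen_exp_aux μ _ hfint hEint
    rw [hEval] at hj
    have hm : ∫ x, γ * (u x - w x) ∂μ = γ * ((∫ x, u x ∂μ) - ∫ x, w x ∂μ) := by
      rw [integral_const_mul, integral_sub hui hwint]
    rw [hm] at hj
    have hlog : γ * ((∫ x, u x ∂μ) - ∫ x, w x ∂μ) ≤ Real.log A - Real.log Z := by
      have h1 : γ * ((∫ x, u x ∂μ) - ∫ x, w x ∂μ) ≤ Real.log (A / Z) :=
        (Real.le_log_iff_exp_le (by positivity)).2 hj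
      rwa [Real.log_div hApos.ne' hZpos.ne'] at h1
    have h2 := mul_le_mul_of_nonneg_left hlog (le_of_lt (one_div_pos.2 hγ))
    have h3 : (1/γ) * (γ * ((∫ x, u x ∂μ) - ∫ x, w x ∂μ))
        = (∫ x, u x ∂μ) - ∫ x, w x ∂μ := by
      field_simp
    rw [h3, mul_sub] at h2
    simp only [hF]
    linarith
  have key_ge : ∀ ε : ℝ, 0 < ε → ∃ w : C(X, ℝ),
      -(1 / γ) * Real.log Z - ∫ x, u x ∂μ ≤ F w + ε := by
    intro ε hε
    obtain ⟨w, hw1, hw2⟩ := usc_approx_aux μ u husc hui ε hε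
    refine ⟨w, ?_⟩
    have hwc : Continuous fun x => Real.exp (-γ * w x) :=
      Real.continuous_exp.comp (continuous_const.mul w.continuous)
    have hAint : Integrable (fun x => Real.exp (-γ * w x)) μ₀ := hint0 _ hwc
    set A := ∫ x, Real.exp (-γ * w x) ∂μ₀ with hA
    have hApos : 0 < A := by
      rw [hA, integral_pos_iff_support_of_nonneg (fun x => (Real.exp_pos _).le) hAint]
      have h1 : (Function.support fun x => Real.exp (-γ * w x)) = Set.univ := by
        ext x; simp [Real.exp_ne_zero]
      rw [h1, measure_univ]
      exact zero_lt_one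
    have hAZ : A ≤ Z :=
      integral_mono hAint hexp fun x => Real.exp_le_exp.2 (by nlinarith [hw1 x])
    have hlog : Real.log A ≤ Real.log Z := Real.log_le_log hApos hAZ
    have h2 := mul_le_mul_of_nonneg_left hlog (le_of_lt (one_div_pos.2 hγ))
    simp only [hF]
    linarith
  have hbdd : BddAbove (Set.range F) := by
    refine ⟨-(1 / γ) * Real.log Z - ∫ x, u x ∂μ, ?_⟩
    rintro _ ⟨w, rfl⟩
    exact key_le w
  have hreal : (⨆ w : C(X, ℝ), F w) = -(1 / γ) * Real.log Z - ∫ x, u x ∂μ := by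
    set S := ⨆ w : C(X, ℝ), F w with hS
    refine le_antisymm (ciSup_le key_le) ?_
    by_contra hcon
    push_neg at hcon
    obtain ⟨w, hw⟩ := key_ge ((-(1 / γ) * Real.log Z - (∫ x, u x ∂μ) - S) / 2) (by linarith)
    have h1 : F w ≤ S := le_ciSup hbdd w
    clear_value S F Z
    linarith
  have hmap : ((⨆ w : C(X, ℝ), F w : ℝ) : EReal) = ⨆ w : C(X, ℝ), ((F w : ℝ) : EReal) :=
    Monotone.map_ciSup_of_continuousAt
      (continuous_coe_real_ereal.continuousAt) (EReal.coe_strictMono.monotone) hbdd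
  rw [← hmap, hreal]
end

section
/- Let X be a compact metric space, μ₀ and μ Borel probability measures on X, and γ > 0. Let u : X → ℝ be an upper semicontinuous function with ∫_X e^{−γu} dμ₀ < ∞ and with u integrable with respect to μ. Suppose that sup_{w ∈ C(X)} N(w) = −(1/γ)·log ∫_X e^{−γu} dμ₀ − ∫_X u dμ, where N(w) := −(1/γ)·log ∫_X e^{−γw} dμ₀ − ∫_X w dμ. Then μ is the Gibbs measure of u: μ is absolutely continuous with respect to μ₀ with density e^{−γu} / ∫_X e^{−γu} dμ₀. -/
open MeasureTheory Filter Topology NNReal ENNReal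


lemma cont_integrable {X : Type*} [TopologicalSpace X] [MeasurableSpace X]
    [OpensMeasurableSpace X] [CompactSpace X] (ν : Measure X) [IsFiniteMeasure ν]
    (f : C(X, ℝ)) : Integrable (fun x => f x) ν := by
  refine Integrable.mono' (integrable_const ‖f‖) f.continuous.aestronglyMeasurable
    (ae_of_all _ fun x => ?_)
  exact f.norm_coe_le_norm x

lemma exp_integral_pos {X : Type*} [MeasurableSpace X] (ν : Measure X)
    [IsProbabilityMeasure ν] {h : X → ℝ} (hint : Integrable (fun x => Real.exp (h x)) ν) :
    0 < ∫ x, Real.exp (h x) ∂ν := by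
  rw [integral_pos_iff_support_of_nonneg (fun x => (Real.exp_pos _).le) hint]
  have hsupp : (Function.support fun x => Real.exp (h x)) = Set.univ :=
    Set.eq_univ_of_forall fun x => (Real.exp_pos _).ne'
  rw [hsupp, measure_univ]
  exact zero_lt_one

lemma usc_approx {X : Type*} [MetricSpace X] [CompactSpace X] [Nonempty X]
    (u : X → ℝ) (husc : UpperSemicontinuous u) :
    ∃ (w : ℕ → X → ℝ) (S : ℝ),
      (∀ n, Continuous (w n)) ∧ (∀ n x, u x ≤ w n x) ∧ (∀ n x, w n x ≤ S) ∧
      (∀ x, Tendsto (fun n => w n x) atTop (𝓝 (u x))) := by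
  have hbdd : BddAbove (Set.range u) := by
    have hopen : ∀ n : ℕ, IsOpen {x | u x < (n : ℝ)} := fun n => husc.isOpen_preimage n
    have hcover : Set.univ ⊆ ⋃ n : ℕ, {x | u x < (n : ℝ)} := fun x _ => by
      obtain ⟨n, hn⟩ := exists_nat_gt (u x)
      exact Set.mem_iUnion.2 ⟨n, hn⟩
    obtain ⟨t, ht⟩ := isCompact_univ.elim_finite_subcover _ hopen hcover
    refine ⟨((t.sup id : ℕ) : ℝ), ?_⟩
    rintro _ ⟨x, rfl⟩
    obtain ⟨n, hnt, hn⟩ := Set.mem_iUnion₂.1 (ht (Set.mem_univ x))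
    calc u x ≤ n := le_of_lt hn
    _ ≤ ((t.sup id : ℕ) : ℝ) := Nat.cast_le.2 (Finset.le_sup (f := id) hnt)
  obtain ⟨S, hS⟩ := hbdd
  have hSy : ∀ y, u y ≤ S := fun y => hS (Set.mem_range_self y)
  set w : ℕ → X → ℝ := fun n x => ⨆ y, (u y - n * dist x y) with hw
  have hb : ∀ (n : ℕ) (x : X), BddAbove (Set.range fun y => u y - n * dist x y) := by
    intro n x
    refine ⟨S, ?_⟩
    rintro _ ⟨y, rfl⟩
    show u y - n * dist x y ≤ S
    have h1 : (0:ℝ) ≤ n * dist x y := by positivity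
    have := hSy y
    linarith
  have hle : ∀ (n : ℕ) (x : X), u x ≤ w n x := by
    intro n x
    have := le_ciSup (hb n x) x
    simpa using this
  have hub : ∀ (n : ℕ) (x : X), w n x ≤ S := by
    intro n x
    refine ciSup_le fun y => ?_
    have h1 : (0:ℝ) ≤ n * dist x y := by positivity
    have := hSy y
    linarith
  have key : ∀ (n : ℕ) (x x' : X), w n x ≤ w n x' + n * dist x x' := by
    intro n x x'
    refine ciSup_le fun y => ?_
    show u y - n * dist x y ≤ w n x' + n * dist x x'
    have h1 : dist x' y ≤ dist x' x + dist x y := dist_triangle x' x y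
    have h2 : (0:ℝ) ≤ (n:ℝ) := Nat.cast_nonneg n
    have h3 : (n:ℝ) * dist x' y ≤ n * dist x' x + n * dist x y := by nlinarith
    have h4 : u y - n * dist x' y ≤ w n x' := le_ciSup (hb n x') y
    have h5 : dist x' x = dist x x' := dist_comm x' x
    rw [h5] at h3
    linarith
  have hcont : ∀ n, Continuous (w n) := by
    intro n
    refine LipschitzWith.continuous (K := n) (LipschitzWith.of_dist_le_mul fun x x' => ?_)
    have hnn : ((n : ℝ≥0) : ℝ) = (n : ℝ) := by simp
    rw [hnn, Real.dist_eq, abs_sub_le_iff]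
    have k1 := key n x x'
    have k2 := key n x' x
    have h5 : dist x' x = dist x x' := dist_comm x' x
    rw [h5] at k2
    constructor <;> linarith
  have htd : ∀ x, Tendsto (fun n => w n x) atTop (𝓝 (u x)) := by
    intro x
    rw [Metric.tendsto_atTop]
    intro ε hε
    have husc' := husc x (u x + ε / 2) (by linarith)
    rw [Metric.eventually_nhds_iff_ball] at husc'
    obtain ⟨δ, hδ, hball⟩ := husc'
    obtain ⟨N, hN⟩ := exists_nat_gt ((S - u x - ε / 2) / δ)
    refine ⟨N, fun n hn => ?_⟩
    have hup : w n x ≤ u x + ε / 2 := by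
      refine ciSup_le fun y => ?_
      by_cases hy : dist x y < δ
      · have hby := hball y (by rwa [Metric.mem_ball, dist_comm])
        have h1 : (0:ℝ) ≤ n * dist x y := by positivity
        linarith
      · push_neg at hy
        have h1 : S - u x - ε / 2 ≤ (N:ℝ) * δ := by
          have := (div_le_iff₀ hδ).1 (le_of_lt hN)
          linarith
        have h2 : (N:ℝ) * δ ≤ (n:ℝ) * dist x y := by
          have hcast : (N:ℝ) ≤ (n:ℝ) := Nat.cast_le.2 hn
          nlinarith [(Nat.cast_nonneg N : (0:ℝ) ≤ N), dist_nonneg (x := x) (y := y)]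
        have h3 := hSy y
        linarith
    have hlo := hle n x
    rw [Real.dist_eq, abs_lt]
    constructor <;> linarith
  exact ⟨w, S, hcont, hle, hub, htd⟩

lemma integral_eq_gibbs {X : Type*} [MetricSpace X] [CompactSpace X]
    [MeasurableSpace X] [BorelSpace X] [Nonempty X]
    (μ₀ μ : Measure X) [IsProbabilityMeasure μ₀] [IsProbabilityMeasure μ]
    (γ : ℝ) (hγ : 0 < γ) (u : X → ℝ) (husc : UpperSemicontinuous u)
    (hexp : Integrable (fun x => Real.exp (-γ * u x)) μ₀)
    (hui : Integrable u μ)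
    (hNle : ∀ v : C(X, ℝ),
      -(1 / γ) * Real.log (∫ x, Real.exp (-γ * v x) ∂μ₀) - ∫ x, v x ∂μ ≤
      -(1 / γ) * Real.log (∫ x, Real.exp (-γ * u x) ∂μ₀) - ∫ x, u x ∂μ)
    (f : C(X, ℝ)) :
    ∫ x, f x ∂μ = ∫ x, f x * (Real.exp (-γ * u x) / ∫ y, Real.exp (-γ * u y) ∂μ₀) ∂μ₀ := by
  have hum : Measurable u := husc.measurable
  set Z : ℝ := ∫ y, Real.exp (-γ * u y) ∂μ₀ with hZdef
  have hZpos : 0 < Z := exp_integral_pos μ₀ hexp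
  obtain ⟨w, S, hwc, hwge, hwle, hwt⟩ := usc_approx u husc
  set I : ℝ := ∫ x, f x ∂μ with hIdef
  set C : ℝ := ‖f‖ with hCdef
  have hfC : ∀ x, |f x| ≤ C := fun x => f.norm_coe_le_norm x
  have hC0 : 0 ≤ C := le_trans (abs_nonneg _) (hfC Classical.ofNonempty)
  -- integrability of exp(-γ(u + t f))
  have hGint : ∀ t : ℝ, Integrable (fun x => Real.exp (-γ * (u x + t * f x))) μ₀ := by
    intro t
    have hrw : (fun x => Real.exp (-γ * (u x + t * f x))) =
        fun x => Real.exp (-γ * (t * f x)) * Real.exp (-γ * u x) := by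
      funext x; rw [← Real.exp_add]; ring_nf
    rw [hrw]
    refine hexp.bdd_mul (c := Real.exp (γ * (|t| * C))) ?_ (ae_of_all _ fun x => ?_)
    · exact (Real.continuous_exp.comp
        (continuous_const.mul (continuous_const.mul f.continuous))).aestronglyMeasurable
    · rw [Real.norm_eq_abs, Real.abs_exp]
      apply Real.exp_le_exp.2
      calc -γ * (t * f x) ≤ |(-γ) * (t * f x)| := le_abs_self _
      _ = γ * (|t| * |f x|) := by
          rw [abs_mul, abs_mul, abs_neg, abs_of_pos hγ]
      _ ≤ γ * (|t| * C) :=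
          mul_le_mul_of_nonneg_left (mul_le_mul_of_nonneg_left (hfC x) (abs_nonneg t)) hγ.le
  set G : ℝ → ℝ := fun t => ∫ x, Real.exp (-γ * (u x + t * f x)) ∂μ₀ with hG
  have hGpos : ∀ t, 0 < G t := fun t => exp_integral_pos μ₀ (hGint t)
  have hG0 : G 0 = Z := by
    rw [hG, hZdef]
    simp only [zero_mul, add_zero]
  -- key inequality : log Z ≤ log (G t) + γ t I
  have hkey : ∀ t : ℝ, Real.log Z ≤ Real.log (G t) + γ * t * I := by
    intro t
    have hwint : ∀ n, Integrable (w n) μ := fun n => cont_integrable μ ⟨w n, hwc n⟩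
    set c : ℕ → ℝ := fun n => ∫ x, w n x ∂μ with hc
    have hclim : Tendsto c atTop (𝓝 (∫ x, u x ∂μ)) := by
      refine tendsto_integral_of_dominated_convergence (bound := fun x => |u x| + |S|)
        (fun n => (hwc n).aestronglyMeasurable) (hui.abs.add (integrable_const _))
        (fun n => ae_of_all _ fun x => ?_) (ae_of_all _ hwt)
      show ‖w n x‖ ≤ |u x| + |S|
      rw [Real.norm_eq_abs, abs_le]
      constructor
      · have h1 := hwge n x; have h2 := neg_abs_le (u x); have h3 := abs_nonneg S; linarith
      · have h1 := hwle n x; have h2 := le_abs_self S; have h3 := abs_nonneg (u x); linarith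
    have hn : ∀ n : ℕ, (-(1 / γ) * Real.log (G t) - t * I) - c n ≤
        -(1 / γ) * Real.log Z - ∫ x, u x ∂μ := by
      intro n
      set v : C(X, ℝ) := ⟨fun x => w n x + t * f x,
        (hwc n).add (continuous_const.mul f.continuous)⟩ with hv
      have hNv := hNle v
      have hvx : ∀ x, v x = w n x + t * f x := fun x => rfl
      have hvint : ∫ x, v x ∂μ = c n + t * I := by
        simp only [hvx]
        rw [integral_add (hwint n) ((cont_integrable μ f).const_mul t), integral_const_mul]
      have hexpv : Integrable (fun x => Real.exp (-γ * v x)) μ₀ :=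
        cont_integrable μ₀ ⟨fun x => Real.exp (-γ * v x),
          Real.continuous_exp.comp (continuous_const.mul v.continuous)⟩
      have hle1 : ∫ x, Real.exp (-γ * v x) ∂μ₀ ≤ G t := by
        refine integral_mono hexpv (hGint t) fun x => ?_
        apply Real.exp_le_exp.2
        rw [hvx x]
        have h1 := hwge n x
        nlinarith [h1, hγ]
      have hpos1 : 0 < ∫ x, Real.exp (-γ * v x) ∂μ₀ := exp_integral_pos μ₀ hexpv
      have hlog1 : Real.log (∫ x, Real.exp (-γ * v x) ∂μ₀) ≤ Real.log (G t) :=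
        Real.log_le_log hpos1 hle1
      rw [hvint] at hNv
      have h3 : (0:ℝ) ≤ 1 / γ := by positivity
      have h4 : (1 / γ) * Real.log (∫ x, Real.exp (-γ * v x) ∂μ₀) ≤ (1 / γ) * Real.log (G t) :=
        mul_le_mul_of_nonneg_left hlog1 h3
      linarith
    have hlim2 : Tendsto (fun n => (-(1 / γ) * Real.log (G t) - t * I) - c n) atTop
        (𝓝 ((-(1 / γ) * Real.log (G t) - t * I) - ∫ x, u x ∂μ)) :=
      tendsto_const_nhds.sub hclim
    have h4 := le_of_tendsto hlim2 (Filter.Eventually.of_forall hn)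
    -- h4 : -(1/γ) log (G t) - t I - ∫u ≤ -(1/γ) log Z - ∫u
    have h5 : -(1 / γ) * Real.log (G t) - t * I ≤ -(1 / γ) * Real.log Z := by linarith
    have hγne : γ ≠ 0 := hγ.ne'
    have h6 := mul_le_mul_of_nonneg_left h5 hγ.le
    have h7 : γ * (-(1 / γ) * Real.log (G t) - t * I) = -Real.log (G t) - γ * t * I := by
      field_simp
    have h8 : γ * (-(1 / γ) * Real.log Z) = -Real.log Z := by field_simp
    rw [h7, h8] at h6
    linarith
  -- derivative of G at 0
  have hmeasF : ∀ t : ℝ, AEStronglyMeasurable (fun x => Real.exp (-γ * (u x + t * f x))) μ₀ :=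
    fun t => (Real.measurable_exp.comp
      (measurable_const.mul (hum.add (measurable_const.mul f.continuous.measurable)))).aestronglyMeasurable
  have hderivG : HasDerivAt G (∫ x, Real.exp (-γ * (u x + 0 * f x)) * (-γ * f x) ∂μ₀) 0 := by
    have hres := hasDerivAt_integral_of_dominated_loc_of_deriv_le
      (F := fun (t : ℝ) x => Real.exp (-γ * (u x + t * f x)))
      (F' := fun (t : ℝ) x => Real.exp (-γ * (u x + t * f x)) * (-γ * f x))
      (bound := fun x => γ * C * Real.exp (γ * C) * Real.exp (-γ * u x))
      (μ := μ₀) (x₀ := 0) (Metric.ball_mem_nhds 0 zero_lt_one)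
      (Filter.Eventually.of_forall fun t => hmeasF t)
      (hGint 0)
      ((hmeasF 0).mul ((measurable_const.mul f.continuous.measurable).aestronglyMeasurable))
      (ae_of_all _ fun x t ht => ?_)
      (hexp.const_mul (γ * C * Real.exp (γ * C)))
      (ae_of_all _ fun x t ht => ?_)
    · exact hres.2
    · -- bound
      rw [Real.norm_eq_abs, abs_mul, Real.abs_exp, abs_mul, abs_neg, abs_of_pos hγ]
      have ht1 : |t| < 1 := by simpa [Real.dist_eq] using Metric.mem_ball.1 ht
      have hfx := hfC x
      have habs : |t| * |f x| ≤ C := by nlinarith [abs_nonneg t, abs_nonneg (f x)]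
      have hexp1 : Real.exp (-γ * (u x + t * f x)) ≤ Real.exp (γ * C) * Real.exp (-γ * u x) := by
        rw [← Real.exp_add]
        apply Real.exp_le_exp.2
        have : -γ * (u x + t * f x) = -γ * u x + (-γ) * (t * f x) := by ring
        rw [this]
        have h7 : (-γ) * (t * f x) ≤ γ * C := by
          calc (-γ) * (t * f x) ≤ |(-γ) * (t * f x)| := le_abs_self _
          _ = γ * (|t| * |f x|) := by rw [abs_mul, abs_mul, abs_neg, abs_of_pos hγ]
          _ ≤ γ * C := by nlinarith
        linarith
      have h8 : γ * |f x| ≤ γ * C := by nlinarith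
      have h9 : (0:ℝ) ≤ Real.exp (-γ * (u x + t * f x)) := (Real.exp_pos _).le
      have h10 : (0:ℝ) < Real.exp (-γ * u x) := Real.exp_pos _
      have h11 : (0:ℝ) < Real.exp (γ * C) := Real.exp_pos _
      calc Real.exp (-γ * (u x + t * f x)) * (γ * |f x|)
          ≤ (Real.exp (γ * C) * Real.exp (-γ * u x)) * (γ * C) :=
            mul_le_mul hexp1 h8 (by positivity) (by positivity)
      _ = γ * C * Real.exp (γ * C) * Real.exp (-γ * u x) := by ring
    · -- differentiability
      have h1 : HasDerivAt (fun s : ℝ => u x + s * f x) (f x) t := by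
        simpa using ((hasDerivAt_id t).mul_const (f x)).const_add (u x)
      have h2 : HasDerivAt (fun s : ℝ => -γ * (u x + s * f x)) (-γ * f x) t := by
        simpa using h1.const_mul (-γ)
      exact h2.exp
  -- derivative of t ↦ log (G t) + γ t I at 0
  set D0 : ℝ := ∫ x, Real.exp (-γ * (u x + 0 * f x)) * (-γ * f x) ∂μ₀ with hD0
  have hlogG : HasDerivAt (fun t => Real.log (G t) + γ * t * I) (D0 / G 0 + γ * I) 0 := by
    have h1 : HasDerivAt (fun t => Real.log (G t)) (D0 / G 0) 0 := hderivG.log (hGpos 0).ne'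
    have h2 : HasDerivAt (fun t : ℝ => γ * t * I) (γ * I) 0 := by
      simpa using (((hasDerivAt_id (0:ℝ)).const_mul γ).mul_const I)
    exact h1.add h2
  have hmin : IsLocalMin (fun t => Real.log (G t) + γ * t * I) 0 := by
    refine Filter.Eventually.of_forall fun t => ?_
    have h1 := hkey t
    simp only [hG0, mul_zero, zero_mul, add_zero]
    linarith
  have hzero : D0 / G 0 + γ * I = 0 := hmin.hasDerivAt_eq_zero hlogG
  have hJ : D0 = -γ * ∫ x, f x * Real.exp (-γ * u x) ∂μ₀ := by
    rw [hD0]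
    have hrw : (fun x => Real.exp (-γ * (u x + 0 * f x)) * (-γ * f x)) =
        fun x => (-γ) * (f x * Real.exp (-γ * u x)) := by
      funext x
      rw [zero_mul, add_zero]
      ring
    rw [hrw, integral_const_mul]
  rw [hG0, hJ] at hzero
  set J : ℝ := ∫ x, f x * Real.exp (-γ * u x) ∂μ₀ with hJdef
  have hI : I = J / Z := by
    have h0 : -γ * J / Z = -(γ * J / Z) := by ring
    rw [h0] at hzero
    have h1 : γ * I = γ * (J / Z) := by rw [← mul_div_assoc]; linarith
    exact mul_left_cancel₀ hγ.ne' h1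
  rw [hI, hJdef, ← integral_div]
  refine integral_congr_ae (ae_of_all _ fun x => ?_)
  show f x * Real.exp (-γ * u x) / Z = f x * (Real.exp (-γ * u x) / Z)
  rw [mul_div_assoc]

/-- Converse direction: if the supremum over continuous `w` of
`N(w) = −(1/γ)·log ∫ e^{−γw} dμ₀ − ∫ w dμ` equals the value of the same expression
evaluated at the upper semicontinuous function `u`, then `μ` is the Gibbs measure of
`u`, i.e. `μ` is absolutely continuous with respect to `μ₀` with density
`e^{−γu}/(∫ e^{−γu} dμ₀)`. -/
theorem sup_attained_implies_gibbs_measure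
    {X : Type*} [MetricSpace X] [CompactSpace X]
    [MeasurableSpace X] [BorelSpace X]
    (μ₀ μ : Measure X) [IsProbabilityMeasure μ₀] [IsProbabilityMeasure μ]
    (γ : ℝ) (hγ : 0 < γ) (u : X → ℝ) (husc : UpperSemicontinuous u)
    (hexp : Integrable (fun x => Real.exp (-γ * u x)) μ₀)
    (hui : Integrable u μ)
    (hsup : (⨆ w : C(X, ℝ),
        ((-(1 / γ) * Real.log (∫ x, Real.exp (-γ * w x) ∂μ₀)
            - ∫ x, w x ∂μ : ℝ) : EReal)) =
      ((-(1 / γ) * Real.log (∫ x, Real.exp (-γ * u x) ∂μ₀)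
          - ∫ x, u x ∂μ : ℝ) : EReal)) :
    μ = μ₀.withDensity (fun x =>
      ENNReal.ofReal (Real.exp (-γ * u x) / ∫ y, Real.exp (-γ * u y) ∂μ₀)) := by
  have hne : Nonempty X := by
    by_contra h
    rw [not_nonempty_iff] at h
    have h1 : μ₀ Set.univ = 1 := measure_univ
    rw [Set.univ_eq_empty_iff.2 h, measure_empty] at h1
    exact zero_ne_one h1
  have hum : Measurable u := husc.measurable
  set Z : ℝ := ∫ y, Real.exp (-γ * u y) ∂μ₀ with hZdef
  have hZpos : 0 < Z := exp_integral_pos μ₀ hexp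
  have hNle : ∀ v : C(X, ℝ),
      -(1 / γ) * Real.log (∫ x, Real.exp (-γ * v x) ∂μ₀) - ∫ x, v x ∂μ ≤
      -(1 / γ) * Real.log (∫ x, Real.exp (-γ * u x) ∂μ₀) - ∫ x, u x ∂μ := by
    intro v
    have h1 := le_iSup (fun w : C(X, ℝ) =>
      ((-(1 / γ) * Real.log (∫ x, Real.exp (-γ * w x) ∂μ₀) - ∫ x, w x ∂μ : ℝ) : EReal)) v
    rw [hsup] at h1
    exact_mod_cast h1
  have stepA : ∀ f : C(X, ℝ),
      ∫ x, f x ∂μ = ∫ x, f x * (Real.exp (-γ * u x) / ∫ y, Real.exp (-γ * u y) ∂μ₀) ∂μ₀ :=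
    fun f => integral_eq_gibbs μ₀ μ γ hγ u husc hexp hui hNle f
  have hdmeas : Measurable (fun x => ENNReal.ofReal (Real.exp (-γ * u x) / Z)) :=
    ENNReal.measurable_ofReal.comp
      ((Real.measurable_exp.comp (measurable_const.mul hum)).div_const Z)
  refine MeasureTheory.ext_of_forall_lintegral_eq_of_IsFiniteMeasure fun f => ?_
  set g : C(X, ℝ) := ⟨fun x => (f x : ℝ), NNReal.continuous_coe.comp f.continuous⟩ with hg
  have hgnn : ∀ x, 0 ≤ g x := fun x => (f x).coe_nonneg
  have h1 : ∫⁻ x, (f x : ℝ≥0∞) ∂μ = ENNReal.ofReal (∫ x, g x ∂μ) := by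
    rw [ofReal_integral_eq_lintegral_ofReal (cont_integrable μ g) (ae_of_all _ hgnn)]
    exact lintegral_congr fun x => ENNReal.ofReal_coe_nnreal.symm
  have h2 : ∫⁻ x, (f x : ℝ≥0∞)
        ∂(μ₀.withDensity (fun x => ENNReal.ofReal (Real.exp (-γ * u x) / Z)))
      = ∫⁻ x, ENNReal.ofReal (g x * (Real.exp (-γ * u x) / Z)) ∂μ₀ := by
    have hfm : Measurable fun x => ((f x : ℝ≥0) : ℝ≥0∞) :=
      measurable_coe_nnreal_ennreal.comp f.continuous.measurable
    rw [lintegral_withDensity_eq_lintegral_mul _ hdmeas hfm]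
    refine lintegral_congr fun x => ?_
    show ENNReal.ofReal (Real.exp (-γ * u x) / Z) * (f x : ℝ≥0∞) = _
    rw [ENNReal.ofReal_mul (hgnn x)]
    have hco : ENNReal.ofReal (g x) = (f x : ℝ≥0∞) := ENNReal.ofReal_coe_nnreal
    rw [hco, mul_comm]
  have hgeint : Integrable (fun x => g x * (Real.exp (-γ * u x) / Z)) μ₀ :=
    (hexp.div_const Z).bdd_mul g.continuous.aestronglyMeasurable
      (ae_of_all _ fun x => g.norm_coe_le_norm x)
  have h3 : ∫⁻ x, ENNReal.ofReal (g x * (Real.exp (-γ * u x) / Z)) ∂μ₀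
      = ENNReal.ofReal (∫ x, g x * (Real.exp (-γ * u x) / Z) ∂μ₀) :=
    (ofReal_integral_eq_lintegral_ofReal hgeint
      (ae_of_all _ fun x => mul_nonneg (hgnn x) (by positivity))).symm
  rw [h1, h2, h3, stepA g, hZdef]
end
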